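/- For every non-erasing morphism Ψ : A* → B* and nonempty words u ∈ B+, w ∈ A+, binom(Ψ(w), u) = Σ_{k=1}^{|u|} Σ_{u = u1···uk, each ui nonempty} Σ_{a1,...,ak ∈ A} binom(Ψ(a1), u1) ··· binom(Ψ(ak), uk) · binom(w, a1···ak). -/
import Mathlib


/-- Number of occurrences of the second word as a (scattered) subword of the first. -/
def binom {α : Type*} [DecidableEq α] : List α → List α → ℕ
  | _, [] => 1
  | [], _ :: _ => 0
  | a :: u, b :: v => binom u (b :: v) + if a = b then binom u v else 0

section Aux

variable {α : Type*} [DecidableEq α]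

@[simp] lemma binom_nil_right (x : List α) : binom x [] = 1 := by cases x <;> rfl

@[simp] lemma binom_nil_left (v : List α) : binom ([] : List α) v = if v = [] then 1 else 0 := by
  cases v <;> simp [binom]

lemma binom_cons_cons (a b : α) (u v : List α) :
    binom (a :: u) (b :: v) = binom u (b :: v) + if a = b then binom u v else 0 := rfl

lemma binom_append (x y u : List α) :
    binom (x ++ y) u = ∑ i ∈ Finset.range (u.length + 1), binom x (u.take i) * binom y (u.drop i) := by
  induction x generalizing u with
  | nil =>
    cases u with
    | nil => simp
    | cons b t =>
      rw [Finset.sum_range_succ']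
      simp
  | cons a x ih =>
    cases u with
    | nil => simp
    | cons b t =>
      rw [Finset.sum_range_succ']
      simp only [List.take_succ_cons, List.drop_succ_cons, List.take_zero, List.drop_zero,
        binom_nil_right, one_mul, List.length_cons]
      simp only [binom_cons_cons, add_mul, Finset.sum_add_distrib]
      rw [List.cons_append, binom_cons_cons, ih (b :: t), ih t, Finset.sum_range_succ']
      simp only [List.take_succ_cons, List.drop_succ_cons, List.take_zero, List.drop_zero,
        binom_nil_right, one_mul, List.length_cons, ite_mul, zero_mul]
      rw [Finset.sum_ite_irrel, Finset.sum_const_zero]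
      split_ifs <;> ring

/-- The finset of ordered factorization patterns (compositions as lists). -/
def comps : ℕ → Finset (List ℕ)
  | 0 => {[]}
  | (n+1) => (Finset.range (n+1)).biUnion fun i =>
      (comps (n - i)).image (List.cons (i+1))
  decreasing_by exact Nat.lt_succ_of_le (Nat.sub_le n i)

lemma mem_comps : ∀ (n : ℕ) (l : List ℕ), l ∈ comps n ↔ l.sum = n ∧ ∀ i ∈ l, 0 < i := by
  intro n
  induction n using Nat.strong_induction_on with
  | _ n ih =>
  intro l
  match n with
  | 0 =>
    simp only [comps, Finset.mem_singleton]
    constructor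
    · rintro rfl; simp
    · rintro ⟨hs, hp⟩
      cases l with
      | nil => rfl
      | cons a l =>
        exfalso
        have := hp a (by simp)
        simp at hs
        omega
  | (m+1) =>
    rw [comps]
    simp only [Finset.mem_biUnion, Finset.mem_range, Finset.mem_image]
    constructor
    · rintro ⟨i, hi, l', hl', rfl⟩
      rw [ih (m - i) (by omega)] at hl'
      obtain ⟨hs, hp⟩ := hl'
      refine ⟨by simp [hs]; omega, ?_⟩
      intro j hj
      rcases List.mem_cons.mp hj with rfl | h
      · omega
      · exact hp _ h
    · rintro ⟨hs, hp⟩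
      cases l with
      | nil => simp at hs
      | cons a l' =>
        have ha : 0 < a := hp a (by simp)
        simp only [List.sum_cons] at hs
        refine ⟨a - 1, by omega, l', ?_, by congr 1; omega⟩
        rw [ih (m - (a-1)) (by omega)]
        exact ⟨by omega, fun i hi => hp i (by simp [hi])⟩

lemma sum_comps (n : ℕ) (g : List ℕ → ℕ) :
    ∑ c : Composition n, g c.blocks = ∑ l ∈ comps n, g l := by
  refine Finset.sum_bij' (fun c _ => c.blocks)
    (fun l hl => ⟨l, fun hi => ((mem_comps n l).mp hl).2 _ hi, ((mem_comps n l).mp hl).1⟩)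
    (fun c _ => (mem_comps n c.blocks).mpr ⟨c.blocks_sum, fun i hi => c.blocks_pos hi⟩)
    (fun l hl => Finset.mem_univ _) (fun c _ => rfl) (fun l hl => rfl) (fun c _ => rfl)

variable {A B : Type*} [DecidableEq A] [DecidableEq B] [Fintype A]

lemma decomp (Ψ : A → List B) (u : List B) (m : ℕ) (H : List A → ℕ) :
    ∑ l ∈ comps (m+1), ∑ f : Fin l.length → A,
        (List.zipWith (fun a x => binom (Ψ a) x) (List.ofFn f)
          (u.splitWrtCompositionAux l)).prod * H (List.ofFn f)
    = ∑ i ∈ Finset.range (m+1), ∑ a0 : A, binom (Ψ a0) (u.take (i+1)) *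
        ∑ l' ∈ comps (m - i), ∑ f' : Fin l'.length → A,
          (List.zipWith (fun a x => binom (Ψ a) x) (List.ofFn f')
            ((u.drop (i+1)).splitWrtCompositionAux l')).prod * H (a0 :: List.ofFn f') := by
  rw [comps]
  rw [Finset.sum_biUnion]
  · refine Finset.sum_congr rfl fun i _ => ?_
    rw [Finset.sum_image (fun a _ b _ h => by injection h)]
    have step : ∀ l' ∈ comps (m - i),
        (∑ f : Fin ((i+1) :: l').length → A,
          (List.zipWith (fun a x => binom (Ψ a) x) (List.ofFn f)
            (u.splitWrtCompositionAux ((i+1) :: l'))).prod * H (List.ofFn f))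
        = ∑ a0 : A, ∑ f' : Fin l'.length → A,
            binom (Ψ a0) (u.take (i+1)) *
              ((List.zipWith (fun a x => binom (Ψ a) x) (List.ofFn f')
                ((u.drop (i+1)).splitWrtCompositionAux l')).prod * H (a0 :: List.ofFn f')) := by
      intro l' _
      refine Eq.trans (Fintype.sum_equiv (Fin.consEquiv fun _ : Fin (l'.length+1) => A)
        _ _ fun p => rfl).symm ?_
      rw [Fintype.sum_prod_type]
      refine Finset.sum_congr rfl fun a0 _ => Finset.sum_congr rfl fun f' _ => ?_
      simp [List.ofFn_succ, Fin.cons_zero, Fin.cons_succ,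
        List.splitWrtCompositionAux_cons, mul_assoc]
    rw [Finset.sum_congr rfl step, Finset.sum_comm]
    refine Finset.sum_congr rfl fun a0 _ => ?_
    rw [Finset.mul_sum]
    exact Finset.sum_congr rfl fun l' _ => (Finset.mul_sum _ _ _).symm
  · intro i _ j _ hij
    simp only [Function.onFun, Finset.disjoint_left, Finset.mem_image]
    rintro x ⟨l1, _, rfl⟩ ⟨l2, _, h⟩
    injection h with h1 _
    omega

lemma binom_flatMap (Ψ : A → List B) :
    ∀ (w : List A) (u : List B),
    binom (w.flatMap Ψ) u = ∑ l ∈ comps u.length, ∑ f : Fin l.length → A,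
      (List.zipWith (fun a x => binom (Ψ a) x) (List.ofFn f)
        (u.splitWrtCompositionAux l)).prod * binom w (List.ofFn f) := by
  intro w
  induction w with
  | nil =>
    intro u
    cases u with
    | nil => simp [comps]
    | cons b t =>
      simp only [List.flatMap_nil, binom_nil_left, if_neg (List.cons_ne_nil b t)]
      refine (Finset.sum_eq_zero fun l hl => Finset.sum_eq_zero fun f _ => ?_).symm
      have hlne : l ≠ [] := by
        intro h
        have := ((mem_comps _ l).mp hl).1
        simp [h] at this
      obtain ⟨n0, l', rfl⟩ := List.exists_cons_of_ne_nil hlne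
      rw [List.ofFn_succ]
      simp [binom]
  | cons a w' ih =>
    intro u
    cases u with
    | nil => simp [comps]
    | cons b t =>
      rw [List.flatMap_cons, binom_append, Finset.sum_range_succ']
      simp only [List.take_zero, List.drop_zero, binom_nil_right, one_mul,
        List.length_cons]
      rw [decomp Ψ (b :: t) t.length]
      simp only [binom_cons_cons, mul_add, Finset.sum_add_distrib, mul_ite, mul_zero,
        Finset.sum_ite_irrel, Finset.sum_const_zero, Finset.sum_ite_eq,
        Finset.mem_univ, if_true]
      rw [← decomp Ψ (b :: t) t.length (binom w')]
      have h1 := ih (b :: t)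
      simp only [List.length_cons] at h1
      rw [← h1]
      have drop_eq : ∀ i ∈ Finset.range (t.length + 1),
          binom (Ψ a) ((b :: t).take (i+1)) *
            (∑ l' ∈ comps (t.length - i), ∑ f' : Fin l'.length → A,
              (List.zipWith (fun a x => binom (Ψ a) x) (List.ofFn f')
                (((b :: t).drop (i+1)).splitWrtCompositionAux l')).prod *
                binom w' (List.ofFn f'))
          = binom (Ψ a) ((b :: t).take (i+1)) * binom (w'.flatMap Ψ) ((b :: t).drop (i+1)) := by
        intro i hi
        rw [ih ((b :: t).drop (i+1))]
        congr 2
        simp only [List.drop_succ_cons, List.length_drop]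
      rw [Finset.sum_congr rfl drop_eq, add_comm]

end Aux

/-- Occurrences of a subword in the image of a word by a non-erasing morphism `Ψ`
(given by its action on letters and extended multiplicatively via `flatMap`).
The sum over all compositions of `|u|` realizes the double sum over `k` from `1`
to `|u|` and over the ordered factorizations of `u` into `k` nonempty factors;
the sum over `f : Fin c.length → A` realizes the sum over the tuples of letters. -/
theorem binom_morphism {A B : Type*} [DecidableEq A] [DecidableEq B] [Fintype A]
    (Ψ : A → List B) (hΨ : ∀ a : A, Ψ a ≠ [])
    (u : List B) (hu : u ≠ []) (w : List A) (hw : w ≠ []) :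
    binom (w.flatMap Ψ) u =
      ∑ c : Composition u.length, ∑ f : Fin c.length → A,
        (List.zipWith (fun a x => binom (Ψ a) x) (List.ofFn f)
            (u.splitWrtComposition c)).prod * binom w (List.ofFn f) := by
  rw [binom_flatMap Ψ w u]
  exact (sum_comps u.length fun l => ∑ f : Fin l.length → A,
    (List.zipWith (fun a x => binom (Ψ a) x) (List.ofFn f)
      (u.splitWrtCompositionAux l)).prod * binom w (List.ofFn f)).symm
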